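/- arXiv:2205.11290 — 2 statements merged into one kernel-verified Lean document; each statement's English description precedes it below -/
import Mathlib

section
/- A finitely generated virtually cyclic torsion-free group that is infinite is infinite cyclic, i.e. isomorphic to ℤ. -/
/-- A finitely generated, virtually cyclic, torsion-free, infinite
group is isomorphic to `ℤ`. -/
theorem stmt3 {P : Type*} [Group P] (hfg : Group.FG P)
    (hvc : ∃ H : Subgroup P, H.FiniteIndex ∧ IsCyclic H)
    (htf : ∀ g : P, g ≠ 1 → ¬IsOfFinOrder g)
    (hinf : Infinite P) :
    Nonempty (P ≃* Multiplicative ℤ) := by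
  classical
  obtain ⟨H, hHfi, hHcyc⟩ := hvc
  set N := H.normalCore with hNdef
  haveI hNnorm : N.Normal := H.normalCore_normal
  haveI : N.FiniteIndex := H.finiteIndex_normalCore
  haveI : IsCyclic N := Subgroup.isCyclic_of_le H.normalCore_le
  -- torsion-freeness in terms of zpow
  have hzpow : ∀ (g : P), g ≠ 1 → ∀ i : ℤ, g ^ i = 1 → i = 0 := by
    intro g hg i hgi
    have h0 : orderOf g = 0 := orderOf_eq_zero (htf g hg)
    have hd := orderOf_dvd_iff_zpow_eq_one.mpr hgi
    rw [h0] at hd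
    exact_mod_cast zero_dvd_iff.mp hd
  have hpow : ∀ (g : P) (k : ℕ), k ≠ 0 → g ^ k = 1 → g = 1 := by
    intro g k hk hgk
    by_contra hg
    exact htf g hg (isOfFinOrder_iff_pow_eq_one.mpr ⟨k, Nat.pos_of_ne_zero hk, hgk⟩)
  have hidx : N.index ≠ 0 := Subgroup.FiniteIndex.index_ne_zero
  -- N is nontrivial
  have hNnt : ∃ x ∈ N, x ≠ (1 : P) := by
    by_contra hc
    push_neg at hc
    have hbot : N = ⊥ := (Subgroup.eq_bot_iff_forall N).mpr hc
    rw [hbot, Subgroup.index_bot] at hidx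
    exact hidx Nat.card_eq_zero_of_infinite
  obtain ⟨n, hn⟩ := IsCyclic.exists_generator (α := N)
  have hn1 : (n : P) ≠ 1 := by
    obtain ⟨x, hx, hx1⟩ := hNnt
    intro h
    obtain ⟨i, hi⟩ := hn ⟨x, hx⟩
    have hix : (n : P) ^ i = x := by
      have := congrArg (Subtype.val) hi
      push_cast at this
      exact this
    apply hx1
    rw [← hix, h, one_zpow]
  -- every element of P commutes with n (and hence with N)
  have key : ∀ g : P, g * (n : P) * g⁻¹ = (n : P) := by
    intro g
    have hmem1 : g * (n : P) * g⁻¹ ∈ N := hNnorm.conj_mem _ n.2 g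
    have hmem2 : g⁻¹ * (n : P) * g ∈ N := by
      simpa using hNnorm.conj_mem _ n.2 g⁻¹
    obtain ⟨j, hj⟩ := hn ⟨g * (n : P) * g⁻¹, hmem1⟩
    obtain ⟨i, hi⟩ := hn ⟨g⁻¹ * (n : P) * g, hmem2⟩
    have hj' : (n : P) ^ j = g * (n : P) * g⁻¹ := by
      have := congrArg (Subtype.val) hj
      push_cast at this
      exact this
    have hi' : (n : P) ^ i = g⁻¹ * (n : P) * g := by
      have := congrArg (Subtype.val) hi
      push_cast at this
      exact this
    -- conjugation formula
    have hconj : ∀ (a x : P) (m : ℤ), (a * x * a⁻¹) ^ m = a * x ^ m * a⁻¹ := by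
      intro a x m
      have := map_zpow (MulAut.conj a) x m
      simpa [MulAut.conj_apply] using this
    have hij : i * j = 1 := by
      have comp : (n : P) ^ (i * j) = (n : P) := by
        have h1 := hconj g⁻¹ ((n : P)) j
        rw [inv_inv] at h1
        rw [zpow_mul, hi', h1, hj']
        group
      have : (n : P) ^ (i * j - 1) = 1 := by
        rw [zpow_sub, comp, zpow_one, mul_inv_cancel]
      have h0 := hzpow _ hn1 _ this
      omega
    have hji : j * i = 1 := by rw [mul_comm]; exact hij
    rcases Int.eq_one_or_neg_one_of_mul_eq_one hji with hj1 | hjm1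
    · rw [hj1, zpow_one] at hj'
      exact hj'.symm
    · -- inversion case: leads to contradiction
      exfalso
      rw [hjm1] at hj'
      have hm : g ^ N.index ∈ N := N.pow_index_mem g
      obtain ⟨l, hl⟩ := hn ⟨g ^ N.index, hm⟩
      have hl' : (n : P) ^ l = g ^ N.index := by
        have := congrArg (Subtype.val) hl
        push_cast at this
        exact this
      -- g commutes with g ^ N.index
      have hfix : g * (n : P) ^ l * g⁻¹ = (n : P) ^ l := by
        rw [hl']
        group
      have hinv : g * (n : P) ^ l * g⁻¹ = (n : P) ^ (-l) := by
        rw [← hconj, ← hj']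
        rw [← zpow_mul]
        ring_nf
      have h2l : (n : P) ^ (l + l) = 1 := by
        have h := hfix.symm.trans hinv
        rw [zpow_add]
        nth_rewrite 2 [h]
        rw [← zpow_add]
        simp
      have hl0 : l = 0 := by have := hzpow _ hn1 _ h2l; omega
      rw [hl0, zpow_zero] at hl'
      have hg1 : g = 1 := hpow g N.index hidx hl'.symm
      rw [hg1] at hj'
      simp only [one_mul, inv_one, mul_one, zpow_neg_one] at hj'
      have : (n : P) ^ (2 : ℤ) = 1 := by
        rw [show (2:ℤ) = 1 + 1 by norm_num, zpow_add, zpow_one]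
        nth_rewrite 2 [← hj']
        simp
      have := hzpow _ hn1 _ this
      omega
  -- N is contained in the center
  have hcen : N ≤ Subgroup.center P := by
    intro x hx
    rw [Subgroup.mem_center_iff]
    intro g
    obtain ⟨l, hl⟩ := hn ⟨x, hx⟩
    have hl' : (n : P) ^ l = x := by
      have := congrArg (Subtype.val) hl
      push_cast at this
      exact this
    have hconj : g * x * g⁻¹ = x := by
      rw [← hl']
      have := map_zpow (MulAut.conj g) (n : P) l
      simp only [MulAut.conj_apply] at this
      rw [this, key]
    calc g * x = (g * x * g⁻¹) * g := by group
    _ = x * g := by rw [hconj]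
  haveI : (Subgroup.center P).FiniteIndex := Subgroup.finiteIndex_of_le hcen
  -- the transfer homomorphism into the center is injective, so P is commutative
  have hcidx : (Subgroup.center P).index ≠ 0 := Subgroup.FiniteIndex.index_ne_zero
  have hinj : Function.Injective (MonoidHom.transferCenterPow P) := by
    rw [injective_iff_map_eq_one]
    intro a ha
    have : (a : P) ^ (Subgroup.center P).index = 1 := by
      have := MonoidHom.transferCenterPow_apply (G := P) a
      rw [ha] at this
      simpa using this.symm
    exact hpow a _ hcidx this
  have hcomm : ∀ x y : P, x * y = y * x := by
    intro x y
    apply hinj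
    rw [map_mul, map_mul]
    exact Subtype.ext (Subgroup.mem_center_iff.mp ((MonoidHom.transferCenterPow P) y).2 _)
  -- the map p ↦ p ^ N.index is an injective homomorphism from P into N
  let f2 : P →* N :=
    { toFun := fun p => ⟨p ^ N.index, N.pow_index_mem p⟩
      map_one' := by simp
      map_mul' := by
        intro x y
        ext
        exact Commute.mul_pow (hcomm x y) _ }
  have hf2 : Function.Injective f2 := by
    rw [injective_iff_map_eq_one]
    intro a ha
    have : a ^ N.index = 1 := by
      have := congrArg (Subtype.val) ha
      simpa [f2] using this
    exact hpow a _ hidx this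
  haveI : IsCyclic P := by
    let e := MulEquiv.subgroupCongr (rfl : f2.range = f2.range)
    let e2 : P ≃* f2.range := MonoidHom.ofInjective hf2
    exact isCyclic_of_surjective e2.symm.toMonoidHom e2.symm.surjective
  -- an infinite cyclic group is isomorphic to ℤ
  obtain ⟨g, hg⟩ := IsCyclic.exists_generator (α := P)
  have hgne : g ≠ 1 := by
    rintro rfl
    obtain ⟨x, y, hxy⟩ := exists_pair_ne P
    obtain ⟨ix, hix⟩ := hg x
    obtain ⟨iy, hiy⟩ := hg y
    simp only [one_zpow] at hix hiy
    exact hxy (hix.symm.trans hiy)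
  let e := zpowersHom P g
  have hesurj : Function.Surjective e := by
    intro x
    obtain ⟨i, hi⟩ := hg x
    exact ⟨Multiplicative.ofAdd i, hi⟩
  have heinj : Function.Injective e := by
    intro a b hab
    have : g ^ (a.toAdd - b.toAdd) = 1 := by
      rw [zpow_sub, show g ^ a.toAdd = g ^ b.toAdd from hab, mul_inv_cancel]
    have := hzpow g hgne _ this
    have : a.toAdd = b.toAdd := by omega
    exact Multiplicative.toAdd.injective this
  exact ⟨(MulEquiv.ofBijective e ⟨heinj, hesurj⟩).symm⟩
end

section
/- Let P ≅ ℤ^{n-1} with n ≥ 2, let F be a finite subset of P \ {0}, let Ṗ ≤ P be a finite-index subgroup, and let f : P → ℤ be a nonzero homomorphism. Then there exists a subgroup N ≤ P with: N ≤ Ṗ, N ≤ ker(f), P/N virtually cyclic (in fact, N can be chosen so that P/N has a finite-index infinite cyclic subgroup), and N ∩ F = ∅. -/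
/-- For `P ≅ ℤ^{n-1}` (n ≥ 2), a finite set `F ⊆ P \ {0}`, a
finite-index subgroup `Ṗ ≤ P` and a nonzero homomorphism `f : P → ℤ`, there is
`N ≤ Ṗ` with `N ≤ ker f`, `P/N` virtually cyclic (indeed with a finite-index
infinite cyclic subgroup), and `N ∩ F = ∅`. -/
theorem stmt8 (n : ℕ) (hn : 2 ≤ n) (F : Finset (Fin (n - 1) → ℤ))
    (hF : (0 : Fin (n - 1) → ℤ) ∉ F)
    (Pdot : AddSubgroup (Fin (n - 1) → ℤ)) (hPdot : Pdot.FiniteIndex)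
    (f : (Fin (n - 1) → ℤ) →+ ℤ) (hf : f ≠ 0) :
    ∃ N : AddSubgroup (Fin (n - 1) → ℤ),
      N ≤ Pdot ∧ N ≤ f.ker ∧
      (∃ C : AddSubgroup ((Fin (n - 1) → ℤ) ⧸ N), C.FiniteIndex ∧
        Nonempty (C ≃+ ℤ)) ∧
      ∀ x ∈ F, x ∉ N := by
  classical
  haveI := hPdot
  -- a generator of the range of `f`
  obtain ⟨g, hg⟩ := Int.subgroup_cyclic f.range
  have hgz : f.range = AddSubgroup.zmultiples g := by
    rw [hg, AddSubgroup.zmultiples_eq_closure]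
  have hg0 : g ≠ 0 := by
    intro h0
    apply hf
    refine AddMonoidHom.ext fun x => ?_
    have hx : f x ∈ f.range := ⟨x, rfl⟩
    rw [hgz, h0] at hx
    obtain ⟨k, hk⟩ := AddSubgroup.mem_zmultiples_iff.mp hx
    rw [← hk, smul_zero]; rfl
  have hgmem : g ∈ f.range := by
    rw [hgz]; exact AddSubgroup.mem_zmultiples g
  obtain ⟨c, hc⟩ := hgmem
  -- the modulus `m`, larger than all coordinates of elements of `F`
  set m : ℕ := (F.sup fun x => Finset.univ.sup fun i => (x i).natAbs) + 1 with hm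
  haveI : NeZero m := ⟨Nat.succ_ne_zero _⟩
  -- the subgroup of vectors all of whose coordinates are divisible by `m`
  let r : ℤ →+ ZMod m := Int.castAddHom (ZMod m)
  let g2 : (Fin (n - 1) → ℤ) →+ (Fin (n - 1) → ZMod m) := r.compLeft _
  set M : AddSubgroup (Fin (n - 1) → ℤ) := g2.ker with hM
  haveI hMfi : M.FiniteIndex := by
    haveI : Finite ((Fin (n - 1) → ℤ) ⧸ M) :=
      Finite.of_equiv _ (QuotientAddGroup.quotientKerEquivRange g2).symm.toEquiv
    exact AddSubgroup.finiteIndex_of_finite_quotient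
  refine ⟨(M ⊓ Pdot) ⊓ f.ker, inf_le_left.trans inf_le_right, inf_le_right, ?_, ?_⟩
  · -- the virtually cyclic part
    set N : AddSubgroup (Fin (n - 1) → ℤ) := (M ⊓ Pdot) ⊓ f.ker with hN
    have hNker : N ≤ f.ker := inf_le_right
    -- the induced map on the quotient
    let fbar : ((Fin (n - 1) → ℤ) ⧸ N) →+ ℤ :=
      QuotientAddGroup.lift N f (fun x hx => hNker hx)
    set cbar : (Fin (n - 1) → ℤ) ⧸ N := QuotientAddGroup.mk c with hcbar
    have hfc : fbar cbar = g := by simpa [fbar, cbar] using hc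
    refine ⟨AddSubgroup.zmultiples cbar, ?_, ?_⟩
    · -- finite index
      set C := AddSubgroup.zmultiples cbar with hC
      set K := f.ker with hK
      haveI : ((M ⊓ Pdot).addSubgroupOf K).FiniteIndex :=
        AddSubgroup.instFiniteIndex_addSubgroupOf _ _
      have hN' : N.addSubgroupOf K = (M ⊓ Pdot).addSubgroupOf K :=
        AddSubgroup.inf_addSubgroupOf_right _ _
      haveI : Finite (K ⧸ N.addSubgroupOf K) := by
        rw [hN']; exact AddSubgroup.finite_quotient_of_finiteIndex
      let ψ : K →+ ((Fin (n - 1) → ℤ) ⧸ N) ⧸ C :=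
        ((QuotientAddGroup.mk' C).comp (QuotientAddGroup.mk' N)).comp K.subtype
      have h0 : ∀ x ∈ N.addSubgroupOf K, ψ x = 0 := by
        intro x hx
        have : ((x : Fin (n - 1) → ℤ) : (Fin (n - 1) → ℤ) ⧸ N) = 0 :=
          (QuotientAddGroup.eq_zero_iff _).mpr hx
        simp [ψ, QuotientAddGroup.mk'_apply, this]
      let ψbar := QuotientAddGroup.lift (N.addSubgroupOf K) ψ h0
      have hsurj : Function.Surjective ψbar := by
        intro y
        induction y using QuotientAddGroup.induction_on with
        | H y =>
        induction y using QuotientAddGroup.induction_on with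
        | H x =>
        have hx : f x ∈ f.range := ⟨x, rfl⟩
        rw [hgz] at hx
        obtain ⟨q, hq⟩ := AddSubgroup.mem_zmultiples_iff.mp hx
        have hz : x - q • c ∈ K := by
          simp only [hK, AddMonoidHom.mem_ker, map_sub, map_zsmul, hc]
          rw [← hq]; ring
        refine ⟨QuotientAddGroup.mk ⟨x - q • c, hz⟩, ?_⟩
        show ψ ⟨x - q • c, hz⟩ = _
        simp only [ψ, AddMonoidHom.comp_apply, AddSubgroup.coe_subtype,
          QuotientAddGroup.mk'_apply]
        have : (QuotientAddGroup.mk (x - q • c) : (Fin (n - 1) → ℤ) ⧸ N)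
            = QuotientAddGroup.mk x - q • cbar := by
          rw [QuotientAddGroup.mk_sub, QuotientAddGroup.mk_zsmul]
        rw [this]
        refine (QuotientAddGroup.eq_iff_sub_mem).mpr ?_
        have : q • cbar ∈ C := AddSubgroup.mem_zmultiples_iff.mpr ⟨q, rfl⟩
        simpa using C.neg_mem this
      haveI : Finite (((Fin (n - 1) → ℤ) ⧸ N) ⧸ C) := Finite.of_surjective ψbar hsurj
      exact AddSubgroup.finiteIndex_of_finite_quotient
    · -- the cyclic subgroup is isomorphic to ℤ
      set C := AddSubgroup.zmultiples cbar with hC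
      let φ : ℤ →+ C := zmultiplesHom C ⟨cbar, AddSubgroup.mem_zmultiples cbar⟩
      have hinj : Function.Injective φ := by
        intro a b hab
        have h1 : a • cbar = b • cbar := by
          have := congrArg (Subtype.val) hab
          simpa [φ] using this
        have h2 : (a : ℤ) * g = b * g := by
          have := congrArg fbar h1
          simpa [map_zsmul, hfc, smul_eq_mul] using this
        exact mul_right_cancel₀ hg0 h2
      have hsurj : Function.Surjective φ := by
        rintro ⟨y, hy⟩
        obtain ⟨k, hk⟩ := AddSubgroup.mem_zmultiples_iff.mp hy
        exact ⟨k, Subtype.ext (by simpa [φ] using hk)⟩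
      exact ⟨(AddEquiv.ofBijective φ ⟨hinj, hsurj⟩).symm⟩
  · -- avoiding `F`
    intro x hx hxN
    have hxM : x ∈ M := hxN.1.1
    have hdvd : ∀ i, (m : ℤ) ∣ x i := by
      intro i
      have : g2 x = 0 := hxM
      have hi := congrFun this i
      simpa [g2, r, AddMonoidHom.compLeft, ZMod.intCast_zmod_eq_zero_iff_dvd] using hi
    have hzero : x = 0 := by
      funext i
      have hb : (x i).natAbs < m := by
        have h1 : (x i).natAbs ≤ Finset.univ.sup fun i => (x i).natAbs :=
          Finset.le_sup (f := fun i => (x i).natAbs) (Finset.mem_univ i)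
        have h2 : (Finset.univ.sup fun i => (x i).natAbs)
            ≤ F.sup fun x => Finset.univ.sup fun i => (x i).natAbs :=
          Finset.le_sup (f := fun x => Finset.univ.sup fun i => (x i).natAbs) hx
        exact hm ▸ Nat.lt_succ_of_le (h1.trans h2)
      have := Int.eq_zero_of_dvd_of_natAbs_lt_natAbs (hdvd i) (by simpa using hb)
      simpa using this
    exact hF (hzero ▸ hx)
end
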